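/- Let Ω be a finite set and G ≤ Sym(Ω) a permutation group. If G is n-complete for some integer n ≥ 2, then G acts (n−1)-transitively on Ω. -/

import Mathlib

/-- `B` is a base for the permutation group `G ≤ Sym(Ω)`: its pointwise
stabiliser in `G` is trivial. -/
def IsBase {Ω : Type*} (G : Subgroup (Equiv.Perm Ω)) (B : Set Ω) : Prop :=
  ∀ g ∈ G, (∀ b ∈ B, g b = b) → g = 1

/-- The base size `b(G)`: the minimum cardinality of a base for `G`. -/
noncomputable def baseSize {Ω : Type*} (G : Subgroup (Equiv.Perm Ω)) : ℕ :=
  sInf {n | ∃ B : Set Ω, IsBase G B ∧ B.ncard = n}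

/-- `G` is `n`-complete: `b(G) = n` and every `n`-element subset of `Ω` is a
base for `G`. -/
def IsNComplete {Ω : Type*} (G : Subgroup (Equiv.Perm Ω)) (n : ℕ) : Prop :=
  baseSize G = n ∧ ∀ B : Set Ω, B.ncard = n → IsBase G B

set_option linter.unusedSectionVars false

section Aux

variable {Ω : Type*} [Fintype Ω]

/-- no (n-1)-set is a base; extract a nontrivial element fixing it. -/
lemma nonbase_elt (G : Subgroup (Equiv.Perm Ω)) (n : ℕ) (hn : 2 ≤ n)
    (hG : IsNComplete G n) (S : Set Ω) (hS : S.ncard = n - 1) :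
    ∃ g ∈ G, g ≠ 1 ∧ ∀ b ∈ S, g b = b := by
  have hnb : ¬ IsBase G S := by
    intro hB
    have h1 : baseSize G ≤ n - 1 := Nat.sInf_le ⟨S, hB, hS⟩
    rw [hG.1] at h1
    omega
  unfold IsBase at hnb
  push_neg at hnb
  obtain ⟨g, hgG, hfix, hne⟩ := hnb
  exact ⟨g, hgG, hne, hfix⟩


/-- a nontrivial element fixing an (n-1)-set fixes exactly it. -/
lemma fixExact (G : Subgroup (Equiv.Perm Ω)) (n : ℕ) (hn : 2 ≤ n)
    (hG : IsNComplete G n) (S : Set Ω) (hS : S.ncard = n - 1) :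
    ∃ g ∈ G, g ≠ 1 ∧ ∀ x, g x = x ↔ x ∈ S := by
  obtain ⟨g, hgG, hne, hfix⟩ := nonbase_elt G n hn hG S hS
  refine ⟨g, hgG, hne, fun x => ⟨fun hgx => ?_, fun hx => hfix x hx⟩⟩
  by_contra hxS
  have hcard : (insert x S).ncard = n := by
    rw [Set.ncard_insert_of_notMem hxS S.toFinite, hS]; omega
  refine hne (hG.2 _ hcard g hgG ?_)
  intro b hb
  rcases hb with rfl | hb
  · exact hgx
  · exact hfix b hb

lemma cardOmega (G : Subgroup (Equiv.Perm Ω)) (n : ℕ) (hn : 2 ≤ n)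
    (hG : IsNComplete G n) : n + 1 ≤ Fintype.card Ω := by
  have hbase : IsBase G (Set.univ : Set Ω) := by
    intro g _ hfix
    exact Equiv.ext fun x => hfix x trivial
  have hle : n ≤ Fintype.card Ω := by
    have h1 : baseSize G ≤ (Set.univ : Set Ω).ncard :=
      Nat.sInf_le ⟨Set.univ, hbase, rfl⟩
    rw [hG.1, Set.ncard_univ, Nat.card_eq_fintype_card] at h1
    exact h1
  by_contra hlt
  have hcard : Fintype.card Ω = n := by omega
  have hpos : 0 < Fintype.card Ω := by omega
  obtain ⟨α⟩ := Fintype.card_pos_iff.mp hpos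
  have hScard : ((Set.univ : Set Ω) \ {α}).ncard = n - 1 := by
    rw [Set.ncard_diff_singleton_of_mem (Set.mem_univ α), Set.ncard_univ,
      Nat.card_eq_fintype_card, hcard]
  obtain ⟨g, hgG, hne, hfix⟩ := nonbase_elt G n hn hG _ hScard
  have hgα : g α = α := by
    by_contra hga
    have h2 : g (g α) = g α := hfix (g α) ⟨trivial, hga⟩
    exact hga (g.injective h2)
  refine hne (Equiv.ext fun x => ?_)
  by_cases hx : x = α
  · simpa [hx] using hgα
  · exact hfix x ⟨trivial, hx⟩


/-- Core counting lemma: if `K` is a (sub)group of permutations fixing `T`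
pointwise, every point outside `T` has nontrivial stabiliser in `K`, and every
nontrivial element of `K` fixes at most one point outside `T`, then `K` is
transitive outside `T`. -/
lemma core_counting (K : Finset (Equiv.Perm Ω)) (T : Set Ω)
    (h1 : (1 : Equiv.Perm Ω) ∈ K)
    (hmul : ∀ a ∈ K, ∀ b ∈ K, a * b ∈ K)
    (hinv : ∀ a ∈ K, a⁻¹ ∈ K)
    (hfixT : ∀ h ∈ K, ∀ t ∈ T, h t = t)
    (ha : ∀ z, z ∉ T → ∃ h ∈ K, h ≠ 1 ∧ h z = z)
    (hb : ∀ h ∈ K, h ≠ 1 → ∀ z, z ∉ T → ∀ w, w ∉ T → z ≠ w →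
      h z = z → h w = w → False)
    (x y : Ω) (hx : x ∉ T) (hy : y ∉ T) :
    ∃ σ ∈ K, σ x = y := by
  classical
  by_contra hcon
  push_neg at hcon
  set Ox : Finset Ω := Finset.univ.filter (fun w => ∃ h ∈ K, h x = w) with hOxdef
  set Oy : Finset Ω := Finset.univ.filter (fun w => ∃ h ∈ K, h y = w) with hOydef
  set St : Ω → Finset (Equiv.Perm Ω) := fun w => K.filter (fun h => h w = w)
    with hStdef
  -- orbits avoid T
  have horb : ∀ z, z ∉ T → ∀ w ∈ Finset.univ.filter
      (fun w => ∃ h ∈ K, h z = w), w ∉ T := by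
    intro z hz w hw hwT
    rw [Finset.mem_filter] at hw
    obtain ⟨-, h, hK, rfl⟩ := hw
    have : h⁻¹ (h z) = h z := hfixT _ (hinv h hK) _ hwT
    rw [Equiv.Perm.inv_def, Equiv.symm_apply_apply] at this
    exact hz (this ▸ hwT)
  have hOxT : ∀ w ∈ Ox, w ∉ T := horb x hx
  have hOyT : ∀ w ∈ Oy, w ∉ T := horb y hy
  -- fiberwise counting : sum of stabiliser sizes over an orbit is |K|
  have hsum : ∀ z, z ∉ T →
      (∑ w ∈ Finset.univ.filter (fun w => ∃ h ∈ K, h z = w), (St w).card)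
        = K.card := by
    intro z hz
    set O := Finset.univ.filter (fun w => ∃ h ∈ K, h z = w) with hOdef
    have hmap : ∀ h ∈ K, h z ∈ O := by
      intro h hK
      simp only [hOdef, Finset.mem_filter, Finset.mem_univ, true_and]
      exact ⟨h, hK, rfl⟩
    rw [Finset.card_eq_sum_card_fiberwise hmap]
    refine Finset.sum_congr rfl fun w hw => ?_
    rw [hOdef, Finset.mem_filter] at hw
    obtain ⟨-, h₀, h₀K, h₀z⟩ := hw
    -- bijection between the fiber over w and St w : h ↦ h * h₀⁻¹
    refine (Finset.card_bij (fun h _ => h * h₀⁻¹) ?_ ?_ ?_).symm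
    · intro h hh
      rw [Finset.mem_filter] at hh
      simp only [hStdef, Finset.mem_filter]
      refine ⟨hmul _ hh.1 _ (hinv _ h₀K), ?_⟩
      have : h₀⁻¹ w = z := by rw [← h₀z, Equiv.Perm.inv_def, Equiv.symm_apply_apply]
      simp only [Equiv.Perm.mul_apply, this, hh.2]
    · intro a ha' b hb' hab
      exact mul_right_cancel hab
    · intro gg hgg
      simp only [hStdef, Finset.mem_filter] at hgg
      refine ⟨gg * h₀, ?_, by group⟩
      rw [Finset.mem_filter]
      exact ⟨hmul _ hgg.1 _ h₀K, by
        simp only [Equiv.Perm.mul_apply, h₀z, hgg.2]⟩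
  have hsumx : (∑ w ∈ Ox, (St w).card) = K.card := hsum x hx
  have hsumy : (∑ w ∈ Oy, (St w).card) = K.card := hsum y hy
  -- each stabiliser has at least two elements
  have htwo : ∀ w, w ∉ T → 2 ≤ (St w).card := by
    intro w hw
    obtain ⟨h, hK, hne, hfw⟩ := ha w hw
    refine Finset.one_lt_card.mpr ⟨h, ?_, 1, ?_, hne⟩ <;>
      simp [hStdef, Finset.mem_filter, hK, hfw, h1]
  -- orbits have size ≤ |K| / 2
  have hhalf : ∀ z, z ∉ T → 2 * (Finset.univ.filter
      (fun w => ∃ h ∈ K, h z = w)).card ≤ K.card := by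
    intro z hz
    calc 2 * (Finset.univ.filter (fun w => ∃ h ∈ K, h z = w)).card
        = (Finset.univ.filter (fun w => ∃ h ∈ K, h z = w)).card • 2 := by
          rw [smul_eq_mul, mul_comm]
      _ ≤ ∑ w ∈ Finset.univ.filter (fun w => ∃ h ∈ K, h z = w), (St w).card :=
          Finset.card_nsmul_le_sum _ _ _ (fun w hw => htwo w (horb z hz w hw))
      _ = K.card := hsum z hz
  have hhx : 2 * Ox.card ≤ K.card := hhalf x hx
  have hhy : 2 * Oy.card ≤ K.card := hhalf y hy
  -- the two orbits are disjoint
  have hdisj : Disjoint Ox Oy := by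
    rw [Finset.disjoint_left]
    intro w hwx hwy
    rw [hOxdef, Finset.mem_filter] at hwx
    rw [hOydef, Finset.mem_filter] at hwy
    obtain ⟨-, h, hK, hhx'⟩ := hwx
    obtain ⟨-, h', hK', hhy'⟩ := hwy
    refine hcon (h'⁻¹ * h) (hmul _ (hinv _ hK') _ hK) ?_
    simp only [Equiv.Perm.mul_apply, hhx', ← hhy', Equiv.Perm.inv_def, Equiv.symm_apply_apply]
  -- stabilisers minus identity are pairwise disjoint
  have hkey : (∑ w ∈ Ox ∪ Oy, ((St w).erase 1).card) ≤ (K.erase 1).card := by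
    rw [← Finset.card_biUnion]
    · refine Finset.card_le_card ?_
      intro h hh
      rw [Finset.mem_biUnion] at hh
      obtain ⟨w, -, hw⟩ := hh
      rw [Finset.mem_erase] at hw ⊢
      rw [hStdef, Finset.mem_filter] at hw
      exact ⟨hw.1, hw.2.1⟩
    · intro w hw w' hw' hne
      rw [Function.onFun, Finset.disjoint_left]
      intro h hh hh'
      rw [Finset.mem_erase, hStdef, Finset.mem_filter] at hh hh'
      have hwT : w ∉ T := by
        rcases Finset.mem_union.mp hw with h' | h'
        exacts [hOxT _ h', hOyT _ h']
      have hw'T : w' ∉ T := by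
        rcases Finset.mem_union.mp hw' with h' | h'
        exacts [hOxT _ h', hOyT _ h']
      exact hb h hh.2.1 hh.1 w hwT w' hw'T hne hh.2.2 hh'.2.2
  -- turn erase-card into card - 1
  have herase : ∀ w, w ∉ T → ((St w).erase 1).card = (St w).card - 1 := by
    intro w hw
    refine Finset.card_erase_of_mem ?_
    simp [hStdef, Finset.mem_filter, h1]
  have hx1 : x ∈ Ox := by
    simp only [hOxdef, Finset.mem_filter, Finset.mem_univ, true_and]
    exact ⟨1, h1, rfl⟩
  have hy1 : y ∈ Oy := by
    simp only [hOydef, Finset.mem_filter, Finset.mem_univ, true_and]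
    exact ⟨1, h1, rfl⟩
  have hxcard : 1 ≤ Ox.card := Finset.card_pos.mpr ⟨x, hx1⟩
  have hycard : 1 ≤ Oy.card := Finset.card_pos.mpr ⟨y, hy1⟩
  -- final arithmetic
  have hsplit : (∑ w ∈ Ox ∪ Oy, ((St w).erase 1).card)
      = (∑ w ∈ Ox, ((St w).erase 1).card)
        + (∑ w ∈ Oy, ((St w).erase 1).card) :=
    Finset.sum_union hdisj
  have hEx : (∑ w ∈ Ox, ((St w).erase 1).card) + Ox.card
      = (∑ w ∈ Ox, (St w).card) := by
    rw [Finset.card_eq_sum_ones, ← Finset.sum_add_distrib]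
    refine Finset.sum_congr rfl fun w hw => ?_
    have := htwo w (hOxT w hw)
    rw [herase w (hOxT w hw)]
    omega
  have hEy : (∑ w ∈ Oy, ((St w).erase 1).card) + Oy.card
      = (∑ w ∈ Oy, (St w).card) := by
    rw [Finset.card_eq_sum_ones, ← Finset.sum_add_distrib]
    refine Finset.sum_congr rfl fun w hw => ?_
    have := htwo w (hOyT w hw)
    rw [herase w (hOyT w hw)]
    omega
  have hK1 : (K.erase 1).card = K.card - 1 := Finset.card_erase_of_mem h1
  have hKpos : 1 ≤ K.card := Finset.card_pos.mpr ⟨1, h1⟩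
  omega


/-- the pointwise stabiliser of any (n-2)-set is transitive on the rest. -/
lemma trans_exact (G : Subgroup (Equiv.Perm Ω)) (n : ℕ) (hn : 2 ≤ n)
    (hG : IsNComplete G n) (T : Set Ω) (hT : T.ncard = n - 2)
    (x y : Ω) (hx : x ∉ T) (hy : y ∉ T) :
    ∃ σ ∈ G, (∀ t ∈ T, σ t = t) ∧ σ x = y := by
  classical
  set K : Finset (Equiv.Perm Ω) :=
    Finset.univ.filter (fun g => g ∈ G ∧ ∀ t ∈ T, g t = t) with hKdef
  have hmem : ∀ g : Equiv.Perm Ω,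
      g ∈ K ↔ (g ∈ G ∧ ∀ t ∈ T, g t = t) := by
    intro g; simp [hKdef]
  obtain ⟨σ, hσK, hσxy⟩ := core_counting K T
    ((hmem 1).mpr ⟨G.one_mem, fun t _ => rfl⟩)
    (by
      intro a haK b hbK
      rw [hmem] at haK hbK ⊢
      refine ⟨G.mul_mem haK.1 hbK.1, fun t ht => ?_⟩
      simp only [Equiv.Perm.mul_apply, hbK.2 t ht, haK.2 t ht])
    (by
      intro a haK
      rw [hmem] at haK ⊢
      refine ⟨G.inv_mem haK.1, fun t ht => ?_⟩
      have := haK.2 t ht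
      conv_lhs => rw [← this]
      rw [Equiv.Perm.inv_def, Equiv.symm_apply_apply])
    (fun h hK => ((hmem h).mp hK).2)
    (by
      intro z hz
      have hScard : (insert z T).ncard = n - 1 := by
        rw [Set.ncard_insert_of_notMem hz T.toFinite, hT]; omega
      obtain ⟨g, hgG, hgne, hgfix⟩ := nonbase_elt G n hn hG _ hScard
      refine ⟨g, (hmem g).mpr ⟨hgG, fun t ht => hgfix t (Set.mem_insert_of_mem _ ht)⟩,
        hgne, hgfix z (Set.mem_insert _ _)⟩)
    (by
      intro h hK hne z hz w hw hzw hhz hhw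
      rw [hmem] at hK
      have hwz : z ∉ insert w T := by
        simp only [Set.mem_insert_iff]
        push_neg
        exact ⟨hzw, hz⟩
      have hcard : (insert z (insert w T)).ncard = n := by
        rw [Set.ncard_insert_of_notMem hwz (T.toFinite.insert w),
          Set.ncard_insert_of_notMem hw T.toFinite, hT]
        omega
      refine hne (hG.2 _ hcard h hK.1 ?_)
      intro b hb
      rcases hb with rfl | rfl | hb
      · exact hhz
      · exact hhw
      · exact hK.2 b hb)
    x y hx hy
  rw [hmem] at hσK
  exact ⟨σ, hσK.1, hσK.2, hσxy⟩

/-- same, for sets of size at most n-2. -/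
lemma trans_le (G : Subgroup (Equiv.Perm Ω)) (n : ℕ) (hn : 2 ≤ n)
    (hG : IsNComplete G n) (T : Set Ω) (hT : T.ncard ≤ n - 2)
    (x y : Ω) (hx : x ∉ T) (hy : y ∉ T) :
    ∃ σ ∈ G, (∀ t ∈ T, σ t = t) ∧ σ x = y := by
  classical
  have hcardΩ := cardOmega G n hn hG
  have hsub : T ⊆ (Set.univ : Set Ω) \ {x, y} := by
    intro t ht
    refine ⟨trivial, ?_⟩
    simp only [Set.mem_insert_iff, Set.mem_singleton_iff]
    push_neg
    exact ⟨fun h => hx (h ▸ ht), fun h => hy (h ▸ ht)⟩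
  have hbig : n - 2 ≤ ((Set.univ : Set Ω) \ ({x, y} : Set Ω)).ncard := by
    have h1 : ({x, y} : Set Ω).ncard ≤ 2 := by
      apply (Set.ncard_insert_le x {y}).trans
      simp [Set.ncard_singleton]
    have h2 : ((Set.univ : Set Ω) \ ({x, y} : Set Ω)).ncard
        = (Set.univ : Set Ω).ncard - ({x, y} : Set Ω).ncard := by
      rw [Set.ncard_diff (Set.subset_univ _)]
    rw [h2, Set.ncard_univ, Nat.card_eq_fintype_card]
    omega
  obtain ⟨T', hTT', hT'sub, hT'card⟩ :=
    Set.exists_subsuperset_card_eq hsub hT hbig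
  have hxT' : x ∉ T' := fun h => (hT'sub h).2 (Set.mem_insert _ _)
  have hyT' : y ∉ T' := fun h => (hT'sub h).2 (Set.mem_insert_of_mem _ rfl)
  obtain ⟨σ, hσG, hσfix, hσxy⟩ := trans_exact G n hn hG T' hT'card x y hxT' hyT'
  exact ⟨σ, hσG, fun t ht => hσfix t (hTT' ht), hσxy⟩

end Aux

/-- If `G` is `n`-complete for some `n ≥ 2`, then `G` is `(n-1)`-transitive:
it is transitive on ordered tuples of `n - 1` pairwise distinct points. -/
theorem statement_2 {Ω : Type*} [Fintype Ω] (G : Subgroup (Equiv.Perm Ω))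
    (n : ℕ) (hn : 2 ≤ n) (hG : IsNComplete G n) :
    ∀ f g : Fin (n - 1) ↪ Ω, ∃ σ ∈ G, ∀ i : Fin (n - 1), σ (f i) = g i := by
  classical
  intro f g
  have key : ∀ k : ℕ, k ≤ n - 1 →
      ∃ σ : Equiv.Perm Ω, σ ∈ G ∧ ∀ i : Fin (n - 1), (i : ℕ) < k →
        σ (f i) = g i := by
    intro k
    induction k with
    | zero => exact fun _ => ⟨1, G.one_mem, fun i hi => absurd hi (by omega)⟩
    | succ k ih =>
      intro hk
      obtain ⟨σ, hσG, hσ⟩ := ih (by omega)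
      have hkn : k < n - 1 := by omega
      set ik : Fin (n - 1) := ⟨k, hkn⟩ with hik
      set T : Set Ω := g '' {j : Fin (n - 1) | (j : ℕ) < k} with hT
      have hTfin : T.Finite := Set.toFinite _
      have hTcard : T.ncard ≤ n - 2 := by
        have h1 : T.ncard ≤ {j : Fin (n - 1) | (j : ℕ) < k}.ncard :=
          Set.ncard_image_le (Set.toFinite _)
        have h2 : {j : Fin (n - 1) | (j : ℕ) < k}.ncard ≤ k := by
          have hinj : Set.InjOn (fun j : Fin (n - 1) => (j : ℕ))
              {j : Fin (n - 1) | (j : ℕ) < k} := fun a _ b _ h => Fin.ext h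
          rw [← Set.ncard_image_of_injOn hinj]
          calc ((fun j : Fin (n - 1) => (j : ℕ)) '' {j | (j : ℕ) < k}).ncard
              ≤ ((Finset.range k : Finset ℕ) : Set ℕ).ncard := by
                apply Set.ncard_le_ncard _ (Set.toFinite _)
                rintro m ⟨j, hj, rfl⟩
                simpa using hj
            _ = k := by rw [Set.ncard_coe_finset, Finset.card_range]
        omega
      have hgi : ∀ i : Fin (n - 1), (i : ℕ) < k → g i ∈ T := by
        intro i hi
        exact ⟨i, hi, rfl⟩
      have hx : σ (f ik) ∉ T := by
        rintro ⟨j, hj, hje⟩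
        rw [← hσ j hj] at hje
        have : f j = f ik := σ.injective hje
        have : j = ik := f.injective this
        rw [this] at hj
        simp [hik] at hj
      have hy : g ik ∉ T := by
        rintro ⟨j, hj, hje⟩
        have : j = ik := g.injective hje
        rw [this] at hj
        simp [hik] at hj
      obtain ⟨τ, hτG, hτfix, hτxy⟩ :=
        trans_le G n hn hG T hTcard _ _ hx hy
      refine ⟨τ * σ, G.mul_mem hτG hσG, fun i hi => ?_⟩
      rcases Nat.lt_succ_iff_lt_or_eq.mp hi with hi' | hi'
      · simp only [Equiv.Perm.mul_apply, hσ i hi']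
        exact hτfix _ (hgi i hi')
      · have : i = ik := Fin.ext hi'
        subst this
        simp only [Equiv.Perm.mul_apply, hτxy]
  obtain ⟨σ, hσG, hσ⟩ := key (n - 1) le_rfl
  exact ⟨σ, hσG, fun i => hσ i i.isLt⟩
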